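/- Whiskering of 3-tracks by 1-tracks is well defined: if J and J' are rank-3 homotopic good 3-paths in M, γ and γ' are rank-1 homotopic 1-paths, and γ(1) equals the single point J(ℝ²×{0}), then the left whiskerings γ∘J and γ'∘J' are good 3-paths and are rank-3 homotopic. -/

import Mathlib

open scoped Manifold

variable (E : Type*) [NormedAddCommGroup E] [NormedSpace ℝ E] [FiniteDimensional ℝ E]
variable {M : Type*} [TopologicalSpace M] [ChartedSpace E M]
  [IsManifold 𝓘(ℝ, E) (⊤ : ℕ∞) M]

/-- A 1-path in `M`: a smooth map `ℝ → M` that is constant near `(-∞, 0]` and near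
`[1, ∞)` (in the sense of the `ε`-conditions). -/
def IsOnePath (γ : ℝ → M) : Prop :=
  ContMDiff 𝓘(ℝ, ℝ) 𝓘(ℝ, E) (⊤ : ℕ∞) γ ∧
    ∃ ε > (0 : ℝ), (∀ t ≤ ε, γ t = γ 0) ∧ (∀ t, 1 - ε ≤ t → γ t = γ 1)

/-- A 2-path in `M`, as a smooth map `ℝ × ℝ → M` with coordinates `(s, t)`,
constant near the boundary in each variable, whose images at `t = 0` and `t = 1`
are single points. -/
def IsTwoPath (g : ℝ × ℝ → M) : Prop :=
  ContMDiff 𝓘(ℝ, ℝ × ℝ) 𝓘(ℝ, E) (⊤ : ℕ∞) g ∧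
    (∃ ε > (0 : ℝ),
      (∀ s t, s ≤ ε → g (s, t) = g (0, t)) ∧
      (∀ s t, 1 - ε ≤ s → g (s, t) = g (1, t)) ∧
      (∀ s t, t ≤ ε → g (s, t) = g (s, 0)) ∧
      (∀ s t, 1 - ε ≤ t → g (s, t) = g (s, 1))) ∧
    (∀ s s', g (s, 0) = g (s', 0)) ∧ (∀ s s', g (s, 1) = g (s', 1))

/-- A rank-1 homotopy: a 2-path whose differential has rank at most 1 at every point. -/
def IsRank1Homotopy (h : ℝ × ℝ → M) : Prop :=
  IsTwoPath E h ∧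
    ∀ p : ℝ × ℝ,
      Module.finrank ℝ
        (LinearMap.range (mfderiv 𝓘(ℝ, ℝ × ℝ) 𝓘(ℝ, E) h p).toLinearMap) ≤ 1

/-- Two 1-paths are rank-1 homotopic if they are joined by a rank-1 homotopy. -/
def Rank1Homotopic (γ γ' : ℝ → M) : Prop :=
  ∃ h : ℝ × ℝ → M, IsRank1Homotopy E h ∧ (∀ t, h (0, t) = γ t) ∧ (∀ t, h (1, t) = γ' t)

/-- A 3-path in `M`, as a smooth map `ℝ × ℝ × ℝ → M` with coordinates `(r, s, t)`. -/
def IsThreePath (α : ℝ × ℝ × ℝ → M) : Prop :=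
  ContMDiff 𝓘(ℝ, ℝ × ℝ × ℝ) 𝓘(ℝ, E) (⊤ : ℕ∞) α ∧
    (∃ ε > (0 : ℝ),
      (∀ r s t, r ≤ ε → α (r, s, t) = α (0, s, t)) ∧
      (∀ r s t, 1 - ε ≤ r → α (r, s, t) = α (1, s, t)) ∧
      (∀ r s t, s ≤ ε → α (r, s, t) = α (r, 0, t)) ∧
      (∀ r s t, 1 - ε ≤ s → α (r, s, t) = α (r, 1, t)) ∧
      (∀ r s t, t ≤ ε → α (r, s, t) = α (r, s, 0)) ∧
      (∀ r s t, 1 - ε ≤ t → α (r, s, t) = α (r, s, 1))) ∧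
    (∀ r s r' s', α (r, s, 0) = α (r', s', 0)) ∧
    (∀ r s r' s', α (r, s, 1) = α (r', s', 1))

/-- A rank-2 homotopy: a 3-path whose differential has rank at most 2 at every point and
whose restrictions to `s = 0` and `s = 1` are rank-1 homotopies. -/
def IsRank2Homotopy (α : ℝ × ℝ × ℝ → M) : Prop :=
  IsThreePath E α ∧
    (∀ p : ℝ × ℝ × ℝ,
      Module.finrank ℝ
        (LinearMap.range (mfderiv 𝓘(ℝ, ℝ × ℝ × ℝ) 𝓘(ℝ, E) α p).toLinearMap) ≤ 2) ∧
    IsRank1Homotopy E (fun p : ℝ × ℝ => α (p.1, 0, p.2)) ∧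
    IsRank1Homotopy E (fun p : ℝ × ℝ => α (p.1, 1, p.2))

/-- `α` is a rank-2 homotopy from the 2-path `g` to the 2-path `g'`. -/
def Rank2HomotopyFrom (α : ℝ × ℝ × ℝ → M) (g g' : ℝ × ℝ → M) : Prop :=
  IsRank2Homotopy E α ∧ (∀ s t, α (0, s, t) = g (s, t)) ∧ (∀ s t, α (1, s, t) = g' (s, t))

/-- Two 2-paths are rank-2 homotopic if they are joined by a rank-2 homotopy. -/
def Rank2Homotopic (g g' : ℝ × ℝ → M) : Prop :=
  ∃ α : ℝ × ℝ × ℝ → M, Rank2HomotopyFrom E α g g'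

/-- The laminatedness condition for a map `ℝ × ℝ × ℝ → M` with coordinates `(r, s, t)`,
expressed via the partial derivatives (the images of the coordinate vectors under the
differential). -/
def IsLaminated (α : ℝ × ℝ × ℝ → M) : Prop :=
  ∀ r s : ℝ,
    (∀ t : ℝ, ∃ a b : ℝ, (a, b) ≠ (0, 0) ∧
        a • mfderiv 𝓘(ℝ, ℝ × ℝ × ℝ) 𝓘(ℝ, E) α (r, s, t) (1, 0, 0) +
          b • mfderiv 𝓘(ℝ, ℝ × ℝ × ℝ) 𝓘(ℝ, E) α (r, s, t) (0, 0, 1) = 0) ∨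
    (∀ t : ℝ, ∃ a b : ℝ, (a, b) ≠ (0, 0) ∧
        a • mfderiv 𝓘(ℝ, ℝ × ℝ × ℝ) 𝓘(ℝ, E) α (r, s, t) (0, 1, 0) +
          b • mfderiv 𝓘(ℝ, ℝ × ℝ × ℝ) 𝓘(ℝ, E) α (r, s, t) (0, 0, 1) = 0) ∨
    (∃ a b : ℝ, (a, b) ≠ (0, 0) ∧ ∀ t : ℝ,
        a • mfderiv 𝓘(ℝ, ℝ × ℝ × ℝ) 𝓘(ℝ, E) α (r, s, t) (1, 0, 0) +
          b • mfderiv 𝓘(ℝ, ℝ × ℝ × ℝ) 𝓘(ℝ, E) α (r, s, t) (0, 1, 0) = 0)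

/-- A laminated rank-2 homotopy. -/
def IsLaminatedRank2Homotopy (α : ℝ × ℝ × ℝ → M) : Prop :=
  IsRank2Homotopy E α ∧ IsLaminated E α

/-- Two 2-paths are laminated rank-2 homotopic if they are joined by a laminated
rank-2 homotopy. -/
def LamRank2Homotopic (g g' : ℝ × ℝ → M) : Prop :=
  ∃ α : ℝ × ℝ × ℝ → M, IsLaminatedRank2Homotopy E α ∧
    (∀ s t, α (0, s, t) = g (s, t)) ∧ (∀ s t, α (1, s, t) = g' (s, t))

/-- A good 3-path: a 3-path `J` such that `J (r, 0, t)` and `J (r, 1, t)` do not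
depend on `r`. -/
def IsGoodThreePath (J : ℝ × ℝ × ℝ → M) : Prop :=
  IsThreePath E J ∧ (∀ r r' t, J (r, 0, t) = J (r', 0, t)) ∧
    (∀ r r' t, J (r, 1, t) = J (r', 1, t))

/-- A 4-path in `M`, as a smooth map `ℝ × ℝ × ℝ × ℝ → M` with coordinates `(q, r, s, t)`. -/
def IsFourPath (W : ℝ × ℝ × ℝ × ℝ → M) : Prop :=
  ContMDiff 𝓘(ℝ, ℝ × ℝ × ℝ × ℝ) 𝓘(ℝ, E) (⊤ : ℕ∞) W ∧
    (∃ ε > (0 : ℝ),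
      (∀ q r s t, q ≤ ε → W (q, r, s, t) = W (0, r, s, t)) ∧
      (∀ q r s t, 1 - ε ≤ q → W (q, r, s, t) = W (1, r, s, t)) ∧
      (∀ q r s t, r ≤ ε → W (q, r, s, t) = W (q, 0, s, t)) ∧
      (∀ q r s t, 1 - ε ≤ r → W (q, r, s, t) = W (q, 1, s, t)) ∧
      (∀ q r s t, s ≤ ε → W (q, r, s, t) = W (q, r, 0, t)) ∧
      (∀ q r s t, 1 - ε ≤ s → W (q, r, s, t) = W (q, r, 1, t)) ∧
      (∀ q r s t, t ≤ ε → W (q, r, s, t) = W (q, r, s, 0)) ∧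
      (∀ q r s t, 1 - ε ≤ t → W (q, r, s, t) = W (q, r, s, 1))) ∧
    (∀ q r s q' r' s', W (q, r, s, 0) = W (q', r', s', 0)) ∧
    (∀ q r s q' r' s', W (q, r, s, 1) = W (q', r', s', 1))

/-- A rank-3 homotopy: a 4-path whose differential has rank at most 3 at every point,
whose restrictions to `r = 0` and `r = 1` are laminated rank-2 homotopies, and whose
restrictions to `s = 0` and `s = 1` are independent of `r` and are rank-1 homotopies. -/
def IsRank3Homotopy (W : ℝ × ℝ × ℝ × ℝ → M) : Prop :=
  IsFourPath E W ∧
    (∀ p : ℝ × ℝ × ℝ × ℝ,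
      Module.finrank ℝ
        (LinearMap.range (mfderiv 𝓘(ℝ, ℝ × ℝ × ℝ × ℝ) 𝓘(ℝ, E) W p).toLinearMap) ≤ 3) ∧
    IsLaminatedRank2Homotopy E (fun p : ℝ × ℝ × ℝ => W (p.1, 0, p.2.1, p.2.2)) ∧
    IsLaminatedRank2Homotopy E (fun p : ℝ × ℝ × ℝ => W (p.1, 1, p.2.1, p.2.2)) ∧
    (∀ q r r' t, W (q, r, 0, t) = W (q, r', 0, t)) ∧
    (∀ q r r' t, W (q, r, 1, t) = W (q, r', 1, t)) ∧
    IsRank1Homotopy E (fun p : ℝ × ℝ => W (p.1, 0, 0, p.2)) ∧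
    IsRank1Homotopy E (fun p : ℝ × ℝ => W (p.1, 0, 1, p.2))

/-- `W` is a rank-3 homotopy from the good 3-path `J` to the good 3-path `J'`. -/
def Rank3HomotopyFrom (W : ℝ × ℝ × ℝ × ℝ → M) (J J' : ℝ × ℝ × ℝ → M) : Prop :=
  IsRank3Homotopy E W ∧ (∀ r s t, W (0, r, s, t) = J (r, s, t)) ∧
    (∀ r s t, W (1, r, s, t) = J' (r, s, t))

/-- Two good 3-paths are rank-3 homotopic if they are joined by a rank-3 homotopy. -/
def Rank3Homotopic (J J' : ℝ × ℝ × ℝ → M) : Prop :=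
  ∃ W : ℝ × ℝ × ℝ × ℝ → M, Rank3HomotopyFrom E W J J'

/-- Left whiskering of a 3-path `J` with a 1-path `γ`. -/
noncomputable def leftWhisker3 (γ : ℝ → M) (J : ℝ × ℝ × ℝ → M) : ℝ × ℝ × ℝ → M := fun p =>
  if p.2.2 ≤ 1 / 2 then γ (2 * p.2.2) else J (p.1, p.2.1, 2 * p.2.2 - 1)


section Whisk3Aux

open Filter ContinuousLinearMap

set_option linter.unusedSectionVars false

variable {E}

variable {P N F : Type*} [NormedAddCommGroup P] [NormedSpace ℝ P]
  [NormedAddCommGroup N] [NormedSpace ℝ N]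

instance whisk3TangentFinite {x : M} : Module.Finite ℝ (TangentSpace 𝓘(ℝ, E) x) :=
  inferInstanceAs (Module.Finite ℝ E)

theorem whisk3_eventuallyEq_of_open {X Y : Type*} [TopologicalSpace X] {s : Set X}
    (hs : IsOpen s) {x : X} (hx : x ∈ s) {f g : X → Y} (hfg : ∀ y ∈ s, f y = g y) :
    f =ᶠ[nhds x] g :=
  eventually_of_mem (hs.mem_nhds hx) hfg

theorem whisk3_aux_model {G : N → M} (hG : ContMDiff 𝓘(ℝ, N) 𝓘(ℝ, E) (⊤ : ℕ∞) G)
    (A : P → N) (L : P →L[ℝ] N) (c : N) (hA : ∀ p, A p = L p + c)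
    {f : P → M} {x : P} (hf : f =ᶠ[nhds x] fun p => G (A p)) :
    ContMDiffAt 𝓘(ℝ, P) 𝓘(ℝ, E) (⊤ : ℕ∞) f x ∧
      mfderiv 𝓘(ℝ, P) 𝓘(ℝ, E) f x =
        (mfderiv 𝓘(ℝ, N) 𝓘(ℝ, E) G (A x)).comp L := by
  have hAfun : A = fun p => L p + c := funext hA
  have hAsm : ContMDiff 𝓘(ℝ, P) 𝓘(ℝ, N) (⊤ : ℕ∞) A := by
    rw [hAfun]; exact ContDiff.contMDiff ((L.contDiff).add contDiff_const)
  have hGA : ContMDiff 𝓘(ℝ, P) 𝓘(ℝ, E) (⊤ : ℕ∞) (fun p => G (A p)) := hG.comp hAsm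
  constructor
  · exact ((hGA x).congr_of_eventuallyEq hf)
  · rw [hf.mfderiv_eq]
    have h1 : mfderiv 𝓘(ℝ, P) 𝓘(ℝ, N) A x = L := by
      rw [mfderiv_eq_fderiv, hAfun]
      rw [fderiv_add_const]
      exact L.fderiv
    have := mfderiv_comp (I' := 𝓘(ℝ, N)) x ((hG (A x)).mdifferentiableAt (by simp))
      ((hAsm x).mdifferentiableAt (by simp))
    rw [Function.comp_def] at this
    rw [this, h1]
    rfl

theorem whisk3_aux_const {m : M} {f : P → M} {x : P} (hf : f =ᶠ[nhds x] fun _ => m) :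
    ContMDiffAt 𝓘(ℝ, P) 𝓘(ℝ, E) (⊤ : ℕ∞) f x ∧
      mfderiv 𝓘(ℝ, P) 𝓘(ℝ, E) f x = 0 := by
  constructor
  · exact (contMDiff_const (c := m)).contMDiffAt.congr_of_eventuallyEq hf
  · rw [hf.mfderiv_eq]; exact mfderiv_const

theorem whisk3_rank_comp_le_left {P' N' F' : Type*}
    [TopologicalSpace P'] [AddCommGroup P'] [Module ℝ P']
    [TopologicalSpace N'] [AddCommGroup N'] [Module ℝ N']
    [TopologicalSpace F'] [AddCommGroup F'] [Module ℝ F'] [Module.Finite ℝ F']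
    (D : N' →L[ℝ] F') (L : P' →L[ℝ] N') :
    Module.finrank ℝ (LinearMap.range (D.comp L).toLinearMap) ≤
      Module.finrank ℝ (LinearMap.range D.toLinearMap) := by
  have : LinearMap.range (D.comp L).toLinearMap ≤ LinearMap.range D.toLinearMap := by
    rintro y ⟨p, rfl⟩; exact ⟨L p, rfl⟩
  exact Submodule.finrank_mono this

theorem whisk3_rank_comp_le_dom {P' N' F' : Type*}
    [TopologicalSpace P'] [AddCommGroup P'] [Module ℝ P']
    [TopologicalSpace N'] [AddCommGroup N'] [Module ℝ N'] [Module.Finite ℝ N']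
    [TopologicalSpace F'] [AddCommGroup F'] [Module ℝ F']
    (D : N' →L[ℝ] F') (L : P' →L[ℝ] N') :
    Module.finrank ℝ (LinearMap.range (D.comp L).toLinearMap) ≤ Module.finrank ℝ N' := by
  calc Module.finrank ℝ (LinearMap.range (D.comp L).toLinearMap)
      ≤ Module.finrank ℝ (LinearMap.range (D.toLinearMap.comp L.toLinearMap)) := le_of_eq rfl
    _ ≤ _ := by
        rw [LinearMap.range_comp]
        exact (Submodule.finrank_map_le _ _).trans (Submodule.finrank_le _)

theorem whisk3_dep_of_rank_le_one {V : Type*} [AddCommGroup V] [Module ℝ V]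
    {S : Submodule ℝ V} [Module.Finite ℝ S] (hS : Module.finrank ℝ S ≤ 1)
    {v w : V} (hv : v ∈ S) (hw : w ∈ S) :
    ∃ a b : ℝ, (a, b) ≠ (0, 0) ∧ a • v + b • w = 0 := by
  obtain ⟨v0, hv0⟩ := finrank_le_one_iff.1 hS
  obtain ⟨a, ha⟩ := hv0 ⟨v, hv⟩
  obtain ⟨b, hb⟩ := hv0 ⟨w, hw⟩
  rcases eq_or_ne b 0 with rfl | hb0
  · refine ⟨0, 1, by simp, ?_⟩
    have : w = (0 : V) := by
      have := congrArg Subtype.val hb; simpa using this.symm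
    simp [this]
  · refine ⟨b, -a, ?_, ?_⟩
    · simp [Prod.ext_iff, hb0]
    · have hv' : v = a • (v0 : V) := by
        have := congrArg Subtype.val ha; simpa using this.symm
      have hw' : w = b • (v0 : V) := by
        have := congrArg Subtype.val hb; simpa using this.symm
      rw [hv', hw', smul_smul, smul_smul]
      rw [mul_comm]
      ring_nf
      simp [mul_comm]

def w3a1 : (ℝ×ℝ×ℝ×ℝ) →L[ℝ] ℝ := fst ℝ ℝ _
def w3a2 : (ℝ×ℝ×ℝ×ℝ) →L[ℝ] ℝ := (fst ℝ ℝ (ℝ×ℝ)).comp (snd ℝ ℝ (ℝ×ℝ×ℝ))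
def w3a3 : (ℝ×ℝ×ℝ×ℝ) →L[ℝ] ℝ :=
  ((fst ℝ ℝ ℝ).comp (snd ℝ ℝ (ℝ×ℝ))).comp (snd ℝ ℝ (ℝ×ℝ×ℝ))
def w3a4 : (ℝ×ℝ×ℝ×ℝ) →L[ℝ] ℝ :=
  ((snd ℝ ℝ ℝ).comp (snd ℝ ℝ (ℝ×ℝ))).comp (snd ℝ ℝ (ℝ×ℝ×ℝ))
def w3b1 : (ℝ×ℝ×ℝ) →L[ℝ] ℝ := fst ℝ ℝ _
def w3b2 : (ℝ×ℝ×ℝ) →L[ℝ] ℝ := (fst ℝ ℝ ℝ).comp (snd ℝ ℝ (ℝ×ℝ))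
def w3b3 : (ℝ×ℝ×ℝ) →L[ℝ] ℝ := (snd ℝ ℝ ℝ).comp (snd ℝ ℝ (ℝ×ℝ))
def w3c1 : (ℝ×ℝ) →L[ℝ] ℝ := fst ℝ ℝ ℝ
def w3c2 : (ℝ×ℝ) →L[ℝ] ℝ := snd ℝ ℝ ℝ

noncomputable def w3Lh4 : (ℝ×ℝ×ℝ×ℝ) →L[ℝ] (ℝ×ℝ) := ((2:ℝ)•w3a1).prod ((2:ℝ)•w3a4)
noncomputable def w3LJ4 : (ℝ×ℝ×ℝ×ℝ) →L[ℝ] (ℝ×ℝ×ℝ) := w3a2.prod (w3a3.prod ((2:ℝ)•w3a4))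
noncomputable def w3Lg4 : (ℝ×ℝ×ℝ×ℝ) →L[ℝ] ℝ := (2:ℝ)•w3a4
noncomputable def w3LW4 : (ℝ×ℝ×ℝ×ℝ) →L[ℝ] (ℝ×ℝ×ℝ×ℝ) :=
  ((2:ℝ)•w3a1).prod (w3a2.prod (w3a3.prod ((2:ℝ)•w3a4)))
noncomputable def w3Lh3 : (ℝ×ℝ×ℝ) →L[ℝ] (ℝ×ℝ) := ((2:ℝ)•w3b1).prod ((2:ℝ)•w3b3)
noncomputable def w3LJ3 : (ℝ×ℝ×ℝ) →L[ℝ] (ℝ×ℝ) := w3b2.prod ((2:ℝ)•w3b3)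
noncomputable def w3Lg3 : (ℝ×ℝ×ℝ) →L[ℝ] ℝ := (2:ℝ)•w3b3
noncomputable def w3LW3 : (ℝ×ℝ×ℝ) →L[ℝ] (ℝ×ℝ×ℝ) :=
  ((2:ℝ)•w3b1).prod (w3b2.prod ((2:ℝ)•w3b3))
noncomputable def w3Lh2 : (ℝ×ℝ) →L[ℝ] (ℝ×ℝ) := ((2:ℝ)•w3c1).prod ((2:ℝ)•w3c2)
noncomputable def w3Lg2 : (ℝ×ℝ) →L[ℝ] ℝ := (2:ℝ)•w3c2

@[simp] lemma w3Lh4_apply (p : ℝ×ℝ×ℝ×ℝ) : w3Lh4 p = (2*p.1, 2*p.2.2.2) := by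
  simp [w3Lh4, w3a1, w3a4, smul_eq_mul]
@[simp] lemma w3LJ4_apply (p : ℝ×ℝ×ℝ×ℝ) : w3LJ4 p = (p.2.1, p.2.2.1, 2*p.2.2.2) := by
  simp [w3LJ4, w3a2, w3a3, w3a4, smul_eq_mul]
@[simp] lemma w3Lg4_apply (p : ℝ×ℝ×ℝ×ℝ) : w3Lg4 p = 2*p.2.2.2 := by
  simp [w3Lg4, w3a4, smul_eq_mul]
@[simp] lemma w3LW4_apply (p : ℝ×ℝ×ℝ×ℝ) :
    w3LW4 p = (2*p.1, p.2.1, p.2.2.1, 2*p.2.2.2) := by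
  simp [w3LW4, w3a1, w3a2, w3a3, w3a4, smul_eq_mul]
@[simp] lemma w3Lh3_apply (p : ℝ×ℝ×ℝ) : w3Lh3 p = (2*p.1, 2*p.2.2) := by
  simp [w3Lh3, w3b1, w3b3, smul_eq_mul]
@[simp] lemma w3LJ3_apply (p : ℝ×ℝ×ℝ) : w3LJ3 p = (p.2.1, 2*p.2.2) := by
  simp [w3LJ3, w3b2, w3b3, smul_eq_mul]
@[simp] lemma w3Lg3_apply (p : ℝ×ℝ×ℝ) : w3Lg3 p = 2*p.2.2 := by
  simp [w3Lg3, w3b3, smul_eq_mul]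
@[simp] lemma w3LW3_apply (p : ℝ×ℝ×ℝ) : w3LW3 p = (2*p.1, p.2.1, 2*p.2.2) := by
  simp [w3LW3, w3b1, w3b2, w3b3, smul_eq_mul]
@[simp] lemma w3Lh2_apply (p : ℝ×ℝ) : w3Lh2 p = (2*p.1, 2*p.2) := by
  simp [w3Lh2, w3c1, w3c2, smul_eq_mul]
@[simp] lemma w3Lg2_apply (p : ℝ×ℝ) : w3Lg2 p = 2*p.2 := by
  simp [w3Lg2, w3c2, smul_eq_mul]

end Whisk3Aux

set_option maxHeartbeats 4000000 in
set_option synthInstance.maxHeartbeats 200000 in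
/-- Whiskering of 3-tracks by 1-tracks is well defined: the left whiskerings of rank-3
homotopic good 3-paths with rank-1 homotopic 1-paths are good 3-paths and are rank-3
homotopic. -/
theorem whisker3_rank3Homotopic (J J' : ℝ × ℝ × ℝ → M) (γ γ' : ℝ → M)
    (hJ : IsGoodThreePath E J) (hJ' : IsGoodThreePath E J')
    (hγ : IsOnePath E γ) (hγ' : IsOnePath E γ')
    (HJ : Rank3Homotopic E J J') (Hγ : Rank1Homotopic E γ γ')
    (hmatch : γ 1 = J (0, 0, 0)) :
    IsGoodThreePath E (leftWhisker3 γ J) ∧ IsGoodThreePath E (leftWhisker3 γ' J') ∧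
      Rank3Homotopic E (leftWhisker3 γ J) (leftWhisker3 γ' J') := by
    classical
  obtain ⟨hJ3path, hJg0, hJg1⟩ := hJ
  obtain ⟨hJsm, ⟨εJ, εJpos, hJr_le, hJr_ge, hJs_le, hJs_ge, hJt_le, hJt_ge⟩,
    hJT0, hJT1⟩ := hJ3path
  obtain ⟨hγsm, εγ, εγpos, hγle, hγge⟩ := hγ
  obtain ⟨hγ'sm, εγ', εγ'pos, hγ'le, hγ'ge⟩ := hγ'
  obtain ⟨W, ⟨hW4path, hWrk, hWl0, hWl1, hWs0r, hWs1r, hWη0, hWη1⟩, hW0, hW1⟩ := HJ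
  obtain ⟨hWsm, ⟨εW, εWpos, hWq_le, hWq_ge, hWr_le, hWr_ge, hWs_le, hWs_ge,
    hWt_le, hWt_ge⟩, hWT0, hWT1⟩ := hW4path
  obtain ⟨h, ⟨⟨hhsm, ⟨εh, εhpos, hhq_le, hhq_ge, hht_le, hht_ge⟩, hhT0, hhT1⟩, hhrk⟩,
    hh0, hh1⟩ := Hγ
  -- key point identifications
  have keyh1 : ∀ q : ℝ, h (q, 1) = γ 1 := fun q => (hhT1 q 0).trans (hh0 1)
  have keyγ'γ : γ' 1 = γ 1 := by rw [← hh1 1]; exact keyh1 1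
  have keyJ0 : ∀ r s : ℝ, J (r, s, 0) = γ 1 := fun r s => (hJT0 r s 0 0).trans hmatch.symm
  have keyW_0 : ∀ q r s : ℝ, W (q, r, s, 0) = γ 1 := fun q r s =>
    (hWT0 q r s 0 0 0).trans ((hW0 0 0 0).trans (keyJ0 0 0))
  have keyW_1 : ∀ q r s : ℝ, W (q, r, s, 1) = J (0, 0, 1) := fun q r s =>
    (hWT1 q r s 0 0 0).trans (hW0 0 0 1)
  -- the small positive constant
  set m : ℝ := min (1/8) (min εJ (min εγ' (min εh εW))) with hm
  have hm0 : 0 < m := lt_min (by norm_num) (lt_min εJpos (lt_min εγ'pos (lt_min εhpos εWpos)))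
  set ε0 : ℝ := m / 2 with hε0def
  have hε0pos : 0 < ε0 := by positivity
  have hε0_16 : ε0 ≤ 1/16 := by
    have : m ≤ 1/8 := min_le_left _ _
    rw [hε0def]; linarith
  have hεJ2 : 2 * ε0 ≤ εJ := by
    have : m ≤ εJ := le_trans (min_le_right _ _) (min_le_left _ _)
    rw [hε0def]; linarith
  have hεγ'2 : 2 * ε0 ≤ εγ' := by
    have : m ≤ εγ' := le_trans (min_le_right _ _) (le_trans (min_le_right _ _) (min_le_left _ _))
    rw [hε0def]; linarith
  have hεh2 : 2 * ε0 ≤ εh := by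
    have : m ≤ εh := le_trans (min_le_right _ _)
      (le_trans (min_le_right _ _) (le_trans (min_le_right _ _) (min_le_left _ _)))
    rw [hε0def]; linarith
  have hεW2 : 2 * ε0 ≤ εW := by
    have : m ≤ εW := le_trans (min_le_right _ _)
      (le_trans (min_le_right _ _) (le_trans (min_le_right _ _) (min_le_right _ _)))
    rw [hε0def]; linarith
  -- the rank-3 homotopy
  set W' : ℝ × ℝ × ℝ × ℝ → M := fun p =>
    if p.1 ≤ 1/2 then
      (if p.2.2.2 ≤ 1/2 then h (2*p.1, 2*p.2.2.2) else J (p.2.1, p.2.2.1, 2*p.2.2.2 - 1))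
    else
      (if p.2.2.2 ≤ 1/2 then γ' (2*p.2.2.2) else W (2*p.1 - 1, p.2.1, p.2.2.1, 2*p.2.2.2 - 1))
    with hW'def
  -- pointwise region descriptions
  have V1 : ∀ q r s t : ℝ, q < 1/2 → t < 1/2 → W' (q,r,s,t) = h (2*q, 2*t) := by
    intro q r s t h1 h2
    simp only [hW'def]
    rw [if_pos h1.le, if_pos h2.le]
  have V2 : ∀ q r s t : ℝ, 1/2 - ε0/2 < t → t < 1/2 + ε0/2 → W' (q,r,s,t) = γ 1 := by
    intro q r s t h1 h2
    simp only [hW'def]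
    split_ifs with hq ht ht
    · rw [hht_ge (2*q) (2*t) (by linarith)]; exact keyh1 (2*q)
    · rw [hJt_le r s (2*t-1) (by linarith)]; exact keyJ0 r s
    · rw [hγ'ge (2*t) (by linarith)]; exact keyγ'γ
    · rw [hWt_le (2*q-1) r s (2*t-1) (by linarith)]; exact keyW_0 (2*q-1) r s
  have V3 : ∀ q r s t : ℝ, q < 1/2 + ε0/2 → 1/2 < t → W' (q,r,s,t) = J (r, s, 2*t-1) := by
    intro q r s t h1 h2
    simp only [hW'def]
    by_cases hq : q ≤ 1/2
    · rw [if_pos hq, if_neg (not_le.2 h2)]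
    · rw [if_neg hq, if_neg (not_le.2 h2)]
      rw [hWq_le (2*q-1) r s (2*t-1) (by linarith)]
      exact hW0 r s (2*t-1)
  have V4 : ∀ q r s t : ℝ, 1/2 - ε0/2 < q → t < 1/2 → W' (q,r,s,t) = γ' (2*t) := by
    intro q r s t h1 h2
    simp only [hW'def]
    by_cases hq : q ≤ 1/2
    · rw [if_pos hq, if_pos h2.le, hhq_ge (2*q) (2*t) (by linarith)]
      exact hh1 (2*t)
    · rw [if_neg hq, if_pos h2.le]
  have V5 : ∀ q r s t : ℝ, 1/2 < q → 1/2 < t →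
      W' (q,r,s,t) = W (2*q-1, r, s, 2*t-1) := by
    intro q r s t h1 h2
    simp only [hW'def]
    rw [if_neg (not_le.2 h1), if_neg (not_le.2 h2)]
  -- path structure conditions for W'
  have PWq_le : ∀ q r s t : ℝ, q ≤ ε0 → W' (q,r,s,t) = W' (0,r,s,t) := by
    intro q r s t hq
    simp only [hW'def]
    rw [if_pos (show q ≤ 1/2 by linarith), if_pos (show (0:ℝ) ≤ 1/2 by norm_num)]
    by_cases ht : t ≤ 1/2
    · rw [if_pos ht, if_pos ht, hhq_le (2*q) (2*t) (by linarith)]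
      norm_num
    · rw [if_neg ht, if_neg ht]
  have PWq_ge : ∀ q r s t : ℝ, 1 - ε0 ≤ q → W' (q,r,s,t) = W' (1,r,s,t) := by
    intro q r s t hq
    simp only [hW'def]
    rw [if_neg (show ¬ q ≤ 1/2 by push_neg; linarith),
      if_neg (show ¬ (1:ℝ) ≤ 1/2 by norm_num)]
    by_cases ht : t ≤ 1/2
    · rw [if_pos ht, if_pos ht]
    · rw [if_neg ht, if_neg ht, hWq_ge (2*q-1) r s (2*t-1) (by linarith)]
      norm_num
  have PWr_le : ∀ q r s t : ℝ, r ≤ ε0 → W' (q,r,s,t) = W' (q,0,s,t) := by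
    intro q r s t hr
    simp only [hW'def]
    split_ifs with hq ht ht
    · rfl
    · exact hJr_le r s (2*t-1) (by linarith)
    · rfl
    · exact hWr_le (2*q-1) r s (2*t-1) (by linarith)
  have PWr_ge : ∀ q r s t : ℝ, 1 - ε0 ≤ r → W' (q,r,s,t) = W' (q,1,s,t) := by
    intro q r s t hr
    simp only [hW'def]
    split_ifs with hq ht ht
    · rfl
    · exact hJr_ge r s (2*t-1) (by linarith)
    · rfl
    · exact hWr_ge (2*q-1) r s (2*t-1) (by linarith)
  have PWs_le : ∀ q r s t : ℝ, s ≤ ε0 → W' (q,r,s,t) = W' (q,r,0,t) := by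
    intro q r s t hs
    simp only [hW'def]
    split_ifs with hq ht ht
    · rfl
    · exact hJs_le r s (2*t-1) (by linarith)
    · rfl
    · exact hWs_le (2*q-1) r s (2*t-1) (by linarith)
  have PWs_ge : ∀ q r s t : ℝ, 1 - ε0 ≤ s → W' (q,r,s,t) = W' (q,r,1,t) := by
    intro q r s t hs
    simp only [hW'def]
    split_ifs with hq ht ht
    · rfl
    · exact hJs_ge r s (2*t-1) (by linarith)
    · rfl
    · exact hWs_ge (2*q-1) r s (2*t-1) (by linarith)
  have PWt_le : ∀ q r s t : ℝ, t ≤ ε0 → W' (q,r,s,t) = W' (q,r,s,0) := by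
    intro q r s t ht
    simp only [hW'def]
    by_cases hq : q ≤ 1/2
    · rw [if_pos hq, if_pos hq, if_pos (show t ≤ 1/2 by linarith),
        if_pos (show (0:ℝ) ≤ 1/2 by norm_num), hht_le (2*q) (2*t) (by linarith)]
      norm_num
    · rw [if_neg hq, if_neg hq, if_pos (show t ≤ 1/2 by linarith),
        if_pos (show (0:ℝ) ≤ 1/2 by norm_num), hγ'le (2*t) (by linarith)]
      norm_num
  have PWt_ge : ∀ q r s t : ℝ, 1 - ε0 ≤ t → W' (q,r,s,t) = W' (q,r,s,1) := by
    intro q r s t ht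
    simp only [hW'def]
    by_cases hq : q ≤ 1/2
    · rw [if_pos hq, if_pos hq, if_neg (show ¬ t ≤ 1/2 by push_neg; linarith),
        if_neg (show ¬ (1:ℝ) ≤ 1/2 by norm_num), hJt_ge r s (2*t-1) (by linarith)]
      norm_num
    · rw [if_neg hq, if_neg hq, if_neg (show ¬ t ≤ 1/2 by push_neg; linarith),
        if_neg (show ¬ (1:ℝ) ≤ 1/2 by norm_num), hWt_ge (2*q-1) r s (2*t-1) (by linarith)]
      norm_num
  have PT0 : ∀ q r s : ℝ, W' (q,r,s,0) = γ 0 := by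
    intro q r s
    simp only [hW'def]
    by_cases hq : q ≤ 1/2
    · rw [if_pos hq, if_pos (show (0:ℝ) ≤ 1/2 by norm_num),
        show (2*(0:ℝ)) = 0 by norm_num, hhT0 (2*q) 0, hh0 0]
    · rw [if_neg hq, if_pos (show (0:ℝ) ≤ 1/2 by norm_num),
        show (2*(0:ℝ)) = 0 by norm_num, ← hh1 0, hhT0 1 0, hh0 0]
  have PT1 : ∀ q r s : ℝ, W' (q,r,s,1) = J (0,0,1) := by
    intro q r s
    simp only [hW'def]
    by_cases hq : q ≤ 1/2
    · rw [if_pos hq, if_neg (show ¬ (1:ℝ) ≤ 1/2 by norm_num),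
        show (2*(1:ℝ)-1) = 1 by norm_num]
      exact hJT1 r s 0 0
    · rw [if_neg hq, if_neg (show ¬ (1:ℝ) ≤ 1/2 by norm_num),
        show (2*(1:ℝ)-1) = 1 by norm_num]
      exact keyW_1 (2*q-1) r s
  have hs0r : ∀ q r r' t : ℝ, W' (q,r,0,t) = W' (q,r',0,t) := by
    intro q r r' t
    simp only [hW'def]
    split_ifs with hq ht ht
    · rfl
    · exact hJg0 r r' (2*t-1)
    · rfl
    · exact hWs0r (2*q-1) r r' (2*t-1)
  have hs1r : ∀ q r r' t : ℝ, W' (q,r,1,t) = W' (q,r',1,t) := by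
    intro q r r' t
    simp only [hW'def]
    split_ifs with hq ht ht
    · rfl
    · exact hJg1 r r' (2*t-1)
    · rfl
    · exact hWs1r (2*q-1) r r' (2*t-1)
    -- continuity of coordinates
  have cont4q : Continuous fun y : ℝ×ℝ×ℝ×ℝ => y.1 := continuous_fst
  have cont4t : Continuous fun y : ℝ×ℝ×ℝ×ℝ => y.2.2.2 := continuous_snd.snd.snd
  have cont3q : Continuous fun y : ℝ×ℝ×ℝ => y.1 := continuous_fst
  have cont3t : Continuous fun y : ℝ×ℝ×ℝ => y.2.2 := continuous_snd.snd
  have cont2q : Continuous fun y : ℝ×ℝ => y.1 := continuous_fst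
  have cont2t : Continuous fun y : ℝ×ℝ => y.2 := continuous_snd
  -- smoothness of auxiliary maps
  have hJpair : ∀ r0 : ℝ, ContMDiff 𝓘(ℝ, ℝ×ℝ) 𝓘(ℝ, E) (⊤ : ℕ∞) (fun u : ℝ×ℝ => J (r0, u.1, u.2)) :=
    fun r0 => hJsm.comp (ContDiff.contMDiff (contDiff_const.prodMk contDiff_id))
  have hJone : ∀ s0 : ℝ, ContMDiff 𝓘(ℝ, ℝ) 𝓘(ℝ, E) (⊤ : ℕ∞) (fun u : ℝ => J (0, s0, u)) :=
    fun s0 => hJsm.comp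
      (ContDiff.contMDiff (contDiff_const.prodMk (contDiff_const.prodMk contDiff_id)))
  have hαsm : ∀ r0 : ℝ, ContMDiff 𝓘(ℝ, ℝ×ℝ×ℝ) 𝓘(ℝ, E) (⊤ : ℕ∞)
      (fun u : ℝ×ℝ×ℝ => W (u.1, r0, u.2.1, u.2.2)) :=
    fun r0 => hWsm.comp
      (ContDiff.contMDiff (contDiff_fst.prodMk (contDiff_const.prodMk contDiff_snd)))
  have hηsm : ∀ s0 : ℝ, ContMDiff 𝓘(ℝ, ℝ×ℝ) 𝓘(ℝ, E) (⊤ : ℕ∞)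
      (fun u : ℝ×ℝ => W (u.1, 0, s0, u.2)) :=
    fun s0 => hWsm.comp (ContDiff.contMDiff
      (contDiff_fst.prodMk (contDiff_const.prodMk (contDiff_const.prodMk contDiff_snd))))
  -- finrank of model tangent spaces
  have frk1 : ∀ x : ℝ, Module.finrank ℝ (TangentSpace 𝓘(ℝ, ℝ) x) = 1 := fun _ =>
    Module.finrank_self ℝ
  have frk2 : ∀ x : ℝ×ℝ, Module.finrank ℝ (TangentSpace 𝓘(ℝ, ℝ×ℝ) x) = 2 := fun _ => by
    show Module.finrank ℝ (ℝ×ℝ) = 2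
    simp [Module.finrank_prod]
  have frk3 : ∀ x : ℝ×ℝ×ℝ, Module.finrank ℝ (TangentSpace 𝓘(ℝ, ℝ×ℝ×ℝ) x) = 3 := fun _ => by
    show Module.finrank ℝ (ℝ×ℝ×ℝ) = 3
    simp [Module.finrank_prod]
  -- regional derivative descriptions for W'
  have RW1 : ∀ q r s t : ℝ, q < 1/2 → t < 1/2 →
      ContMDiffAt 𝓘(ℝ, ℝ×ℝ×ℝ×ℝ) 𝓘(ℝ, E) (⊤ : ℕ∞) W' (q,r,s,t) ∧
        mfderiv 𝓘(ℝ, ℝ×ℝ×ℝ×ℝ) 𝓘(ℝ, E) W' (q,r,s,t) =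
          (mfderiv 𝓘(ℝ, ℝ×ℝ) 𝓘(ℝ, E) h (2*q, 2*t)).comp w3Lh4 := by
    intro q r s t h1 h2
    refine whisk3_aux_model hhsm (fun y : ℝ×ℝ×ℝ×ℝ => ((2*y.1, 2*y.2.2.2) : ℝ×ℝ))
      w3Lh4 (0 : ℝ×ℝ) (fun p => by simp) ?_
    exact whisk3_eventuallyEq_of_open
      ((isOpen_lt cont4q continuous_const).inter (isOpen_lt cont4t continuous_const))
      (⟨h1, h2⟩ : ((q,r,s,t) : ℝ×ℝ×ℝ×ℝ) ∈ {y : ℝ×ℝ×ℝ×ℝ | y.1 < 1/2 ∧ y.2.2.2 < 1/2})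
      (fun y hy => V1 y.1 y.2.1 y.2.2.1 y.2.2.2 hy.1 hy.2)
  have RW2 : ∀ q r s t : ℝ, 1/2 - ε0/2 < t → t < 1/2 + ε0/2 →
      ContMDiffAt 𝓘(ℝ, ℝ×ℝ×ℝ×ℝ) 𝓘(ℝ, E) (⊤ : ℕ∞) W' (q,r,s,t) ∧
        mfderiv 𝓘(ℝ, ℝ×ℝ×ℝ×ℝ) 𝓘(ℝ, E) W' (q,r,s,t) = 0 := by
    intro q r s t h1 h2
    refine whisk3_aux_const (m := γ 1) ?_
    exact whisk3_eventuallyEq_of_open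
      ((isOpen_lt continuous_const cont4t).inter (isOpen_lt cont4t continuous_const))
      (⟨h1, h2⟩ : ((q,r,s,t) : ℝ×ℝ×ℝ×ℝ) ∈
        {y : ℝ×ℝ×ℝ×ℝ | 1/2 - ε0/2 < y.2.2.2 ∧ y.2.2.2 < 1/2 + ε0/2})
      (fun y hy => V2 y.1 y.2.1 y.2.2.1 y.2.2.2 hy.1 hy.2)
  have RW3 : ∀ q r s t : ℝ, q < 1/2 + ε0/2 → 1/2 < t →
      ContMDiffAt 𝓘(ℝ, ℝ×ℝ×ℝ×ℝ) 𝓘(ℝ, E) (⊤ : ℕ∞) W' (q,r,s,t) ∧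
        mfderiv 𝓘(ℝ, ℝ×ℝ×ℝ×ℝ) 𝓘(ℝ, E) W' (q,r,s,t) =
          (mfderiv 𝓘(ℝ, ℝ×ℝ×ℝ) 𝓘(ℝ, E) J (r, s, 2*t-1)).comp w3LJ4 := by
    intro q r s t h1 h2
    refine whisk3_aux_model hJsm (fun y : ℝ×ℝ×ℝ×ℝ => ((y.2.1, y.2.2.1, 2*y.2.2.2 - 1) : ℝ×ℝ×ℝ))
      w3LJ4 ((0:ℝ), (0:ℝ), (-1:ℝ)) (fun p => by simp [Prod.ext_iff, sub_eq_add_neg]) ?_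
    exact whisk3_eventuallyEq_of_open
      ((isOpen_lt cont4q continuous_const).inter (isOpen_lt continuous_const cont4t))
      (⟨h1, h2⟩ : ((q,r,s,t) : ℝ×ℝ×ℝ×ℝ) ∈
        {y : ℝ×ℝ×ℝ×ℝ | y.1 < 1/2 + ε0/2 ∧ 1/2 < y.2.2.2})
      (fun y hy => V3 y.1 y.2.1 y.2.2.1 y.2.2.2 hy.1 hy.2)
  have RW4 : ∀ q r s t : ℝ, 1/2 - ε0/2 < q → t < 1/2 →
      ContMDiffAt 𝓘(ℝ, ℝ×ℝ×ℝ×ℝ) 𝓘(ℝ, E) (⊤ : ℕ∞) W' (q,r,s,t) ∧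
        mfderiv 𝓘(ℝ, ℝ×ℝ×ℝ×ℝ) 𝓘(ℝ, E) W' (q,r,s,t) =
          (mfderiv 𝓘(ℝ, ℝ) 𝓘(ℝ, E) γ' (2*t)).comp w3Lg4 := by
    intro q r s t h1 h2
    refine whisk3_aux_model hγ'sm (fun y : ℝ×ℝ×ℝ×ℝ => ((2*y.2.2.2) : ℝ))
      w3Lg4 (0:ℝ) (fun p => by simp) ?_
    exact whisk3_eventuallyEq_of_open
      ((isOpen_lt continuous_const cont4q).inter (isOpen_lt cont4t continuous_const))
      (⟨h1, h2⟩ : ((q,r,s,t) : ℝ×ℝ×ℝ×ℝ) ∈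
        {y : ℝ×ℝ×ℝ×ℝ | 1/2 - ε0/2 < y.1 ∧ y.2.2.2 < 1/2})
      (fun y hy => V4 y.1 y.2.1 y.2.2.1 y.2.2.2 hy.1 hy.2)
  have RW5 : ∀ q r s t : ℝ, 1/2 < q → 1/2 < t →
      ContMDiffAt 𝓘(ℝ, ℝ×ℝ×ℝ×ℝ) 𝓘(ℝ, E) (⊤ : ℕ∞) W' (q,r,s,t) ∧
        mfderiv 𝓘(ℝ, ℝ×ℝ×ℝ×ℝ) 𝓘(ℝ, E) W' (q,r,s,t) =
          (mfderiv 𝓘(ℝ, ℝ×ℝ×ℝ×ℝ) 𝓘(ℝ, E) W (2*q-1, r, s, 2*t-1)).comp w3LW4 := by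
    intro q r s t h1 h2
    refine whisk3_aux_model hWsm
      (fun y : ℝ×ℝ×ℝ×ℝ => ((2*y.1 - 1, y.2.1, y.2.2.1, 2*y.2.2.2 - 1) : ℝ×ℝ×ℝ×ℝ))
      w3LW4 ((-1:ℝ), (0:ℝ), (0:ℝ), (-1:ℝ)) (fun p => by simp [Prod.ext_iff, sub_eq_add_neg]) ?_
    exact whisk3_eventuallyEq_of_open
      ((isOpen_lt continuous_const cont4q).inter (isOpen_lt continuous_const cont4t))
      (⟨h1, h2⟩ : ((q,r,s,t) : ℝ×ℝ×ℝ×ℝ) ∈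
        {y : ℝ×ℝ×ℝ×ℝ | 1/2 < y.1 ∧ 1/2 < y.2.2.2})
      (fun y hy => V5 y.1 y.2.1 y.2.2.1 y.2.2.2 hy.1 hy.2)
  -- smoothness and rank of W'
  have covW : ∀ p : ℝ×ℝ×ℝ×ℝ,
      ContMDiffAt 𝓘(ℝ, ℝ×ℝ×ℝ×ℝ) 𝓘(ℝ, E) (⊤ : ℕ∞) W' p ∧
      Module.finrank ℝ
        (LinearMap.range (mfderiv 𝓘(ℝ, ℝ×ℝ×ℝ×ℝ) 𝓘(ℝ, E) W' p).toLinearMap) ≤ 3 := by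
    rintro ⟨q, r, s, t⟩
    rcases lt_trichotomy t (1/2) with ht | ht | ht
    · rcases lt_or_ge q (1/2) with hq | hq
      · obtain ⟨hsm, hD⟩ := RW1 q r s t hq ht
        refine ⟨hsm, ?_⟩
        rw [hD]
        exact (whisk3_rank_comp_le_left _ _).trans ((hhrk _).trans (by norm_num))
      · obtain ⟨hsm, hD⟩ := RW4 q r s t (by linarith) ht
        refine ⟨hsm, ?_⟩
        rw [hD]
        refine (whisk3_rank_comp_le_dom _ _).trans ?_
        rw [frk1]; norm_num
    · obtain ⟨hsm, hD⟩ := RW2 q r s t (by linarith) (by linarith)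
      refine ⟨hsm, ?_⟩
      rw [hD]
      rw [ContinuousLinearMap.coe_zero, LinearMap.range_zero, finrank_bot]
      norm_num
    · rcases le_or_gt q (1/2) with hq | hq
      · obtain ⟨hsm, hD⟩ := RW3 q r s t (by linarith) ht
        refine ⟨hsm, ?_⟩
        rw [hD]
        refine (whisk3_rank_comp_le_dom _ _).trans ?_
        rw [frk3]
      · obtain ⟨hsm, hD⟩ := RW5 q r s t hq ht
        exact ⟨hsm, by rw [hD]; exact (whisk3_rank_comp_le_left _ _).trans (hWrk _)⟩
  have hW'sm : ContMDiff 𝓘(ℝ, ℝ×ℝ×ℝ×ℝ) 𝓘(ℝ, E) (⊤ : ℕ∞) W' := fun p => (covW p).1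
    -- regional derivative descriptions for the r-slices of W'
  have Rr1 : ∀ r0 q s t : ℝ, q < 1/2 → t < 1/2 →
      ContMDiffAt 𝓘(ℝ, ℝ×ℝ×ℝ) 𝓘(ℝ, E) (⊤ : ℕ∞) (fun x : ℝ×ℝ×ℝ => W' (x.1, r0, x.2.1, x.2.2)) (q,s,t) ∧
        mfderiv 𝓘(ℝ, ℝ×ℝ×ℝ) 𝓘(ℝ, E) (fun x : ℝ×ℝ×ℝ => W' (x.1, r0, x.2.1, x.2.2)) (q,s,t) =
          (mfderiv 𝓘(ℝ, ℝ×ℝ) 𝓘(ℝ, E) h (2*q, 2*t)).comp w3Lh3 := by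
    intro r0 q s t h1 h2
    refine whisk3_aux_model hhsm (fun y : ℝ×ℝ×ℝ => ((2*y.1, 2*y.2.2) : ℝ×ℝ))
      w3Lh3 (0 : ℝ×ℝ) (fun p => by simp) ?_
    exact whisk3_eventuallyEq_of_open
      ((isOpen_lt cont3q continuous_const).inter (isOpen_lt cont3t continuous_const))
      (⟨h1, h2⟩ : ((q,s,t) : ℝ×ℝ×ℝ) ∈ {y : ℝ×ℝ×ℝ | y.1 < 1/2 ∧ y.2.2 < 1/2})
      (fun y hy => V1 y.1 r0 y.2.1 y.2.2 hy.1 hy.2)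
  have Rr2 : ∀ r0 q s t : ℝ, 1/2 - ε0/2 < t → t < 1/2 + ε0/2 →
      ContMDiffAt 𝓘(ℝ, ℝ×ℝ×ℝ) 𝓘(ℝ, E) (⊤ : ℕ∞) (fun x : ℝ×ℝ×ℝ => W' (x.1, r0, x.2.1, x.2.2)) (q,s,t) ∧
        mfderiv 𝓘(ℝ, ℝ×ℝ×ℝ) 𝓘(ℝ, E) (fun x : ℝ×ℝ×ℝ => W' (x.1, r0, x.2.1, x.2.2)) (q,s,t) = 0 := by
    intro r0 q s t h1 h2
    refine whisk3_aux_const (m := γ 1) ?_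
    exact whisk3_eventuallyEq_of_open
      ((isOpen_lt continuous_const cont3t).inter (isOpen_lt cont3t continuous_const))
      (⟨h1, h2⟩ : ((q,s,t) : ℝ×ℝ×ℝ) ∈
        {y : ℝ×ℝ×ℝ | 1/2 - ε0/2 < y.2.2 ∧ y.2.2 < 1/2 + ε0/2})
      (fun y hy => V2 y.1 r0 y.2.1 y.2.2 hy.1 hy.2)
  have Rr3 : ∀ r0 q s t : ℝ, q < 1/2 + ε0/2 → 1/2 < t →
      ContMDiffAt 𝓘(ℝ, ℝ×ℝ×ℝ) 𝓘(ℝ, E) (⊤ : ℕ∞) (fun x : ℝ×ℝ×ℝ => W' (x.1, r0, x.2.1, x.2.2)) (q,s,t) ∧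
        mfderiv 𝓘(ℝ, ℝ×ℝ×ℝ) 𝓘(ℝ, E) (fun x : ℝ×ℝ×ℝ => W' (x.1, r0, x.2.1, x.2.2)) (q,s,t) =
          (mfderiv 𝓘(ℝ, ℝ×ℝ) 𝓘(ℝ, E) (fun u : ℝ×ℝ => J (r0, u.1, u.2)) (s, 2*t-1)).comp w3LJ3 := by
    intro r0 q s t h1 h2
    refine whisk3_aux_model (hJpair r0) (fun y : ℝ×ℝ×ℝ => ((y.2.1, 2*y.2.2 - 1) : ℝ×ℝ))
      w3LJ3 ((0:ℝ), (-1:ℝ)) (fun p => by simp [Prod.ext_iff, sub_eq_add_neg]) ?_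
    exact whisk3_eventuallyEq_of_open
      ((isOpen_lt cont3q continuous_const).inter (isOpen_lt continuous_const cont3t))
      (⟨h1, h2⟩ : ((q,s,t) : ℝ×ℝ×ℝ) ∈ {y : ℝ×ℝ×ℝ | y.1 < 1/2 + ε0/2 ∧ 1/2 < y.2.2})
      (fun y hy => V3 y.1 r0 y.2.1 y.2.2 hy.1 hy.2)
  have Rr4 : ∀ r0 q s t : ℝ, 1/2 - ε0/2 < q → t < 1/2 →
      ContMDiffAt 𝓘(ℝ, ℝ×ℝ×ℝ) 𝓘(ℝ, E) (⊤ : ℕ∞) (fun x : ℝ×ℝ×ℝ => W' (x.1, r0, x.2.1, x.2.2)) (q,s,t) ∧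
        mfderiv 𝓘(ℝ, ℝ×ℝ×ℝ) 𝓘(ℝ, E) (fun x : ℝ×ℝ×ℝ => W' (x.1, r0, x.2.1, x.2.2)) (q,s,t) =
          (mfderiv 𝓘(ℝ, ℝ) 𝓘(ℝ, E) γ' (2*t)).comp w3Lg3 := by
    intro r0 q s t h1 h2
    refine whisk3_aux_model hγ'sm (fun y : ℝ×ℝ×ℝ => ((2*y.2.2) : ℝ))
      w3Lg3 (0:ℝ) (fun p => by simp) ?_
    exact whisk3_eventuallyEq_of_open
      ((isOpen_lt continuous_const cont3q).inter (isOpen_lt cont3t continuous_const))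
      (⟨h1, h2⟩ : ((q,s,t) : ℝ×ℝ×ℝ) ∈ {y : ℝ×ℝ×ℝ | 1/2 - ε0/2 < y.1 ∧ y.2.2 < 1/2})
      (fun y hy => V4 y.1 r0 y.2.1 y.2.2 hy.1 hy.2)
  have Rr5 : ∀ r0 q s t : ℝ, 1/2 < q → 1/2 < t →
      ContMDiffAt 𝓘(ℝ, ℝ×ℝ×ℝ) 𝓘(ℝ, E) (⊤ : ℕ∞) (fun x : ℝ×ℝ×ℝ => W' (x.1, r0, x.2.1, x.2.2)) (q,s,t) ∧
        mfderiv 𝓘(ℝ, ℝ×ℝ×ℝ) 𝓘(ℝ, E) (fun x : ℝ×ℝ×ℝ => W' (x.1, r0, x.2.1, x.2.2)) (q,s,t) =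
          (mfderiv 𝓘(ℝ, ℝ×ℝ×ℝ) 𝓘(ℝ, E) (fun u : ℝ×ℝ×ℝ => W (u.1, r0, u.2.1, u.2.2))
            (2*q-1, s, 2*t-1)).comp w3LW3 := by
    intro r0 q s t h1 h2
    refine whisk3_aux_model (hαsm r0)
      (fun y : ℝ×ℝ×ℝ => ((2*y.1 - 1, y.2.1, 2*y.2.2 - 1) : ℝ×ℝ×ℝ))
      w3LW3 ((-1:ℝ), (0:ℝ), (-1:ℝ)) (fun p => by simp [Prod.ext_iff, sub_eq_add_neg]) ?_
    exact whisk3_eventuallyEq_of_open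
      ((isOpen_lt continuous_const cont3q).inter (isOpen_lt continuous_const cont3t))
      (⟨h1, h2⟩ : ((q,s,t) : ℝ×ℝ×ℝ) ∈ {y : ℝ×ℝ×ℝ | 1/2 < y.1 ∧ 1/2 < y.2.2})
      (fun y hy => V5 y.1 r0 y.2.1 y.2.2 hy.1 hy.2)
  -- rank bound for the r-slices
  have hρrk : ∀ r0 : ℝ,
      (∀ p : ℝ×ℝ×ℝ, Module.finrank ℝ (LinearMap.range
        (mfderiv 𝓘(ℝ, ℝ×ℝ×ℝ) 𝓘(ℝ, E) (fun u : ℝ×ℝ×ℝ => W (u.1, r0, u.2.1, u.2.2)) p).toLinearMap) ≤ 2) →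
      ∀ p : ℝ×ℝ×ℝ, Module.finrank ℝ (LinearMap.range
        (mfderiv 𝓘(ℝ, ℝ×ℝ×ℝ) 𝓘(ℝ, E) (fun x : ℝ×ℝ×ℝ => W' (x.1, r0, x.2.1, x.2.2)) p).toLinearMap) ≤ 2 := by
    intro r0 hα p
    obtain ⟨q, s, t⟩ := p
    rcases lt_trichotomy t (1/2) with ht | ht | ht
    · rcases lt_or_ge q (1/2) with hq | hq
      · obtain ⟨-, hD⟩ := Rr1 r0 q s t hq ht
        rw [hD]
        exact (whisk3_rank_comp_le_left _ _).trans ((hhrk _).trans (by norm_num))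
      · obtain ⟨-, hD⟩ := Rr4 r0 q s t (by linarith) ht
        rw [hD]
        refine (whisk3_rank_comp_le_dom _ _).trans ?_
        rw [frk1]; norm_num
    · obtain ⟨-, hD⟩ := Rr2 r0 q s t (by linarith) (by linarith)
      rw [hD]
      rw [ContinuousLinearMap.coe_zero, LinearMap.range_zero, finrank_bot]
      norm_num
    · rcases le_or_gt q (1/2) with hq | hq
      · obtain ⟨-, hD⟩ := Rr3 r0 q s t (by linarith) ht
        rw [hD]
        refine (whisk3_rank_comp_le_dom _ _).trans ?_
        rw [frk2]
      · obtain ⟨-, hD⟩ := Rr5 r0 q s t hq ht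
        rw [hD]
        exact (whisk3_rank_comp_le_left _ _).trans (hα _)
  -- regional derivative descriptions for the (0,s0)-slices of W'
  have Rb1 : ∀ s0 q t : ℝ, q < 1/2 → t < 1/2 →
      ContMDiffAt 𝓘(ℝ, ℝ×ℝ) 𝓘(ℝ, E) (⊤ : ℕ∞) (fun y : ℝ×ℝ => W' (y.1, 0, s0, y.2)) (q,t) ∧
        mfderiv 𝓘(ℝ, ℝ×ℝ) 𝓘(ℝ, E) (fun y : ℝ×ℝ => W' (y.1, 0, s0, y.2)) (q,t) =
          (mfderiv 𝓘(ℝ, ℝ×ℝ) 𝓘(ℝ, E) h (2*q, 2*t)).comp w3Lh2 := by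
    intro s0 q t h1 h2
    refine whisk3_aux_model hhsm (fun y : ℝ×ℝ => ((2*y.1, 2*y.2) : ℝ×ℝ))
      w3Lh2 (0 : ℝ×ℝ) (fun p => by simp) ?_
    exact whisk3_eventuallyEq_of_open
      ((isOpen_lt cont2q continuous_const).inter (isOpen_lt cont2t continuous_const))
      (⟨h1, h2⟩ : ((q,t) : ℝ×ℝ) ∈ {y : ℝ×ℝ | y.1 < 1/2 ∧ y.2 < 1/2})
      (fun y hy => V1 y.1 0 s0 y.2 hy.1 hy.2)
  have Rb2 : ∀ s0 q t : ℝ, 1/2 - ε0/2 < t → t < 1/2 + ε0/2 →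
      ContMDiffAt 𝓘(ℝ, ℝ×ℝ) 𝓘(ℝ, E) (⊤ : ℕ∞) (fun y : ℝ×ℝ => W' (y.1, 0, s0, y.2)) (q,t) ∧
        mfderiv 𝓘(ℝ, ℝ×ℝ) 𝓘(ℝ, E) (fun y : ℝ×ℝ => W' (y.1, 0, s0, y.2)) (q,t) = 0 := by
    intro s0 q t h1 h2
    refine whisk3_aux_const (m := γ 1) ?_
    exact whisk3_eventuallyEq_of_open
      ((isOpen_lt continuous_const cont2t).inter (isOpen_lt cont2t continuous_const))
      (⟨h1, h2⟩ : ((q,t) : ℝ×ℝ) ∈ {y : ℝ×ℝ | 1/2 - ε0/2 < y.2 ∧ y.2 < 1/2 + ε0/2})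
      (fun y hy => V2 y.1 0 s0 y.2 hy.1 hy.2)
  have Rb3 : ∀ s0 q t : ℝ, q < 1/2 + ε0/2 → 1/2 < t →
      ContMDiffAt 𝓘(ℝ, ℝ×ℝ) 𝓘(ℝ, E) (⊤ : ℕ∞) (fun y : ℝ×ℝ => W' (y.1, 0, s0, y.2)) (q,t) ∧
        mfderiv 𝓘(ℝ, ℝ×ℝ) 𝓘(ℝ, E) (fun y : ℝ×ℝ => W' (y.1, 0, s0, y.2)) (q,t) =
          (mfderiv 𝓘(ℝ, ℝ) 𝓘(ℝ, E) (fun u : ℝ => J (0, s0, u)) (2*t-1)).comp w3Lg2 := by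
    intro s0 q t h1 h2
    refine whisk3_aux_model (hJone s0) (fun y : ℝ×ℝ => ((2*y.2 - 1) : ℝ))
      w3Lg2 (-1:ℝ) (fun p => by simp [sub_eq_add_neg]) ?_
    exact whisk3_eventuallyEq_of_open
      ((isOpen_lt cont2q continuous_const).inter (isOpen_lt continuous_const cont2t))
      (⟨h1, h2⟩ : ((q,t) : ℝ×ℝ) ∈ {y : ℝ×ℝ | y.1 < 1/2 + ε0/2 ∧ 1/2 < y.2})
      (fun y hy => V3 y.1 0 s0 y.2 hy.1 hy.2)
  have Rb4 : ∀ s0 q t : ℝ, 1/2 - ε0/2 < q → t < 1/2 →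
      ContMDiffAt 𝓘(ℝ, ℝ×ℝ) 𝓘(ℝ, E) (⊤ : ℕ∞) (fun y : ℝ×ℝ => W' (y.1, 0, s0, y.2)) (q,t) ∧
        mfderiv 𝓘(ℝ, ℝ×ℝ) 𝓘(ℝ, E) (fun y : ℝ×ℝ => W' (y.1, 0, s0, y.2)) (q,t) =
          (mfderiv 𝓘(ℝ, ℝ) 𝓘(ℝ, E) γ' (2*t)).comp w3Lg2 := by
    intro s0 q t h1 h2
    refine whisk3_aux_model hγ'sm (fun y : ℝ×ℝ => ((2*y.2) : ℝ))
      w3Lg2 (0:ℝ) (fun p => by simp) ?_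
    exact whisk3_eventuallyEq_of_open
      ((isOpen_lt continuous_const cont2q).inter (isOpen_lt cont2t continuous_const))
      (⟨h1, h2⟩ : ((q,t) : ℝ×ℝ) ∈ {y : ℝ×ℝ | 1/2 - ε0/2 < y.1 ∧ y.2 < 1/2})
      (fun y hy => V4 y.1 0 s0 y.2 hy.1 hy.2)
  have Rb5 : ∀ s0 q t : ℝ, 1/2 < q → 1/2 < t →
      ContMDiffAt 𝓘(ℝ, ℝ×ℝ) 𝓘(ℝ, E) (⊤ : ℕ∞) (fun y : ℝ×ℝ => W' (y.1, 0, s0, y.2)) (q,t) ∧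
        mfderiv 𝓘(ℝ, ℝ×ℝ) 𝓘(ℝ, E) (fun y : ℝ×ℝ => W' (y.1, 0, s0, y.2)) (q,t) =
          (mfderiv 𝓘(ℝ, ℝ×ℝ) 𝓘(ℝ, E) (fun u : ℝ×ℝ => W (u.1, 0, s0, u.2))
            (2*q-1, 2*t-1)).comp w3Lh2 := by
    intro s0 q t h1 h2
    refine whisk3_aux_model (hηsm s0) (fun y : ℝ×ℝ => ((2*y.1 - 1, 2*y.2 - 1) : ℝ×ℝ))
      w3Lh2 ((-1:ℝ), (-1:ℝ)) (fun p => by simp [Prod.ext_iff, sub_eq_add_neg]) ?_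
    exact whisk3_eventuallyEq_of_open
      ((isOpen_lt continuous_const cont2q).inter (isOpen_lt continuous_const cont2t))
      (⟨h1, h2⟩ : ((q,t) : ℝ×ℝ) ∈ {y : ℝ×ℝ | 1/2 < y.1 ∧ 1/2 < y.2})
      (fun y hy => V5 y.1 0 s0 y.2 hy.1 hy.2)
  -- rank bound for the (0,s0)-slices
  have hβrk : ∀ s0 : ℝ,
      (∀ p : ℝ×ℝ, Module.finrank ℝ (LinearMap.range
        (mfderiv 𝓘(ℝ, ℝ×ℝ) 𝓘(ℝ, E) (fun u : ℝ×ℝ => W (u.1, 0, s0, u.2)) p).toLinearMap) ≤ 1) →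
      ∀ p : ℝ×ℝ, Module.finrank ℝ (LinearMap.range
        (mfderiv 𝓘(ℝ, ℝ×ℝ) 𝓘(ℝ, E) (fun y : ℝ×ℝ => W' (y.1, 0, s0, y.2)) p).toLinearMap) ≤ 1 := by
    intro s0 hη p
    obtain ⟨q, t⟩ := p
    rcases lt_trichotomy t (1/2) with ht | ht | ht
    · rcases lt_or_ge q (1/2) with hq | hq
      · obtain ⟨-, hD⟩ := Rb1 s0 q t hq ht
        rw [hD]
        exact (whisk3_rank_comp_le_left _ _).trans (hhrk _)
      · obtain ⟨-, hD⟩ := Rb4 s0 q t (by linarith) ht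
        rw [hD]
        refine (whisk3_rank_comp_le_dom _ _).trans ?_
        rw [frk1]
    · obtain ⟨-, hD⟩ := Rb2 s0 q t (by linarith) (by linarith)
      rw [hD]
      rw [ContinuousLinearMap.coe_zero, LinearMap.range_zero, finrank_bot]
      norm_num
    · rcases le_or_gt q (1/2) with hq | hq
      · obtain ⟨-, hD⟩ := Rb3 s0 q t (by linarith) ht
        rw [hD]
        refine (whisk3_rank_comp_le_dom _ _).trans ?_
        rw [frk1]
      · obtain ⟨-, hD⟩ := Rb5 s0 q t hq ht
        rw [hD]
        exact (whisk3_rank_comp_le_left _ _).trans (hη _)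
    -- three-path and two-path structures of the slices
  have sliceThree : ∀ r0 : ℝ, IsThreePath E (fun x : ℝ×ℝ×ℝ => W' (x.1, r0, x.2.1, x.2.2)) := by
    intro r0
    refine ⟨hW'sm.comp (ContDiff.contMDiff (contDiff_fst.prodMk (contDiff_const.prodMk contDiff_snd))),
      ⟨ε0, hε0pos, ?_, ?_, ?_, ?_, ?_, ?_⟩, ?_, ?_⟩
    · exact fun a s t ha => PWq_le a r0 s t ha
    · exact fun a s t ha => PWq_ge a r0 s t ha
    · exact fun a s t hs => PWs_le a r0 s t hs
    · exact fun a s t hs => PWs_ge a r0 s t hs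
    · exact fun a s t ht => PWt_le a r0 s t ht
    · exact fun a s t ht => PWt_ge a r0 s t ht
    · exact fun a s a' s' => (PT0 a r0 s).trans (PT0 a' r0 s').symm
    · exact fun a s a' s' => (PT1 a r0 s).trans (PT1 a' r0 s').symm
  have sliceTwo : ∀ r0 s0 : ℝ, IsTwoPath E (fun y : ℝ×ℝ => W' (y.1, r0, s0, y.2)) := by
    intro r0 s0
    refine ⟨hW'sm.comp (ContDiff.contMDiff
        (contDiff_fst.prodMk (contDiff_const.prodMk (contDiff_const.prodMk contDiff_snd)))),
      ⟨ε0, hε0pos, ?_, ?_, ?_, ?_⟩, ?_, ?_⟩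
    · exact fun a t ha => PWq_le a r0 s0 t ha
    · exact fun a t ha => PWq_ge a r0 s0 t ha
    · exact fun a t ht => PWt_le a r0 s0 t ht
    · exact fun a t ht => PWt_ge a r0 s0 t ht
    · exact fun a a' => (PT0 a r0 s0).trans (PT0 a' r0 s0).symm
    · exact fun a a' => (PT1 a r0 s0).trans (PT1 a' r0 s0).symm
  -- laminatedness of the r-slices
  have hρlam : ∀ r0 : ℝ,
      IsLaminated E (fun u : ℝ×ℝ×ℝ => W (u.1, r0, u.2.1, u.2.2)) →
      IsLaminated E (fun x : ℝ×ℝ×ℝ => W' (x.1, r0, x.2.1, x.2.2)) := by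
    intro r0 hlam q s
    rcases lt_trichotomy q (1/2) with hq | hq | hq
    · -- q < 1/2 : disjunct (i)
      left
      intro t
      rcases lt_trichotomy t (1/2) with ht | ht | ht
      · obtain ⟨-, hD⟩ := Rr1 r0 q s t hq ht
        rw [hD]
        exact whisk3_dep_of_rank_le_one
          (S := LinearMap.range (mfderiv 𝓘(ℝ, ℝ×ℝ) 𝓘(ℝ, E) h (2*q, 2*t)).toLinearMap)
          (hhrk _) ⟨w3Lh3 (1,0,0), rfl⟩ ⟨w3Lh3 (0,0,1), rfl⟩
      · obtain ⟨-, hD⟩ := Rr2 r0 q s t (by linarith) (by linarith)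
        rw [hD]
        exact ⟨1, 0, by simp, by simp; rfl⟩
      · obtain ⟨-, hD⟩ := Rr3 r0 q s t (by linarith) ht
        rw [hD]
        refine ⟨1, 0, by simp, ?_⟩
        have key : (1:ℝ) • (mfderiv 𝓘(ℝ, ℝ×ℝ) 𝓘(ℝ, E) (fun u : ℝ×ℝ => J (r0, u.1, u.2))
              (s, 2*t-1)) (w3LJ3 (1,0,0)) +
            (0:ℝ) • (mfderiv 𝓘(ℝ, ℝ×ℝ) 𝓘(ℝ, E) (fun u : ℝ×ℝ => J (r0, u.1, u.2))
              (s, 2*t-1)) (w3LJ3 (0,0,1)) = 0 := by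
          rw [show w3LJ3 ((1:ℝ),(0:ℝ),(0:ℝ)) = (0 : ℝ×ℝ) by norm_num [Prod.ext_iff]]; erw [map_zero]
          simp
        exact key
    · -- q = 1/2 : disjunct (i)
      left
      intro t
      rcases lt_trichotomy t (1/2) with ht | ht | ht
      · obtain ⟨-, hD⟩ := Rr4 r0 q s t (by linarith) ht
        rw [hD]
        refine ⟨1, 0, by simp, ?_⟩
        have key : (1:ℝ) • (mfderiv 𝓘(ℝ, ℝ) 𝓘(ℝ, E) γ' (2*t)) (w3Lg3 (1,0,0)) +
            (0:ℝ) • (mfderiv 𝓘(ℝ, ℝ) 𝓘(ℝ, E) γ' (2*t)) (w3Lg3 (0,0,1)) = 0 := by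
          rw [show w3Lg3 ((1:ℝ),(0:ℝ),(0:ℝ)) = (0 : ℝ) by norm_num]; erw [map_zero]
          simp
        exact key
      · obtain ⟨-, hD⟩ := Rr2 r0 q s t (by linarith) (by linarith)
        rw [hD]
        exact ⟨1, 0, by simp, by simp; rfl⟩
      · obtain ⟨-, hD⟩ := Rr3 r0 q s t (by linarith) ht
        rw [hD]
        refine ⟨1, 0, by simp, ?_⟩
        have key : (1:ℝ) • (mfderiv 𝓘(ℝ, ℝ×ℝ) 𝓘(ℝ, E) (fun u : ℝ×ℝ => J (r0, u.1, u.2))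
              (s, 2*t-1)) (w3LJ3 (1,0,0)) +
            (0:ℝ) • (mfderiv 𝓘(ℝ, ℝ×ℝ) 𝓘(ℝ, E) (fun u : ℝ×ℝ => J (r0, u.1, u.2))
              (s, 2*t-1)) (w3LJ3 (0,0,1)) = 0 := by
          rw [show w3LJ3 ((1:ℝ),(0:ℝ),(0:ℝ)) = (0 : ℝ×ℝ) by norm_num [Prod.ext_iff]]; erw [map_zero]
          simp
        exact key
    · -- q > 1/2 : use laminatedness of the slice of W
      rcases hlam (2*q-1) s with hi | hii | hiii
      · left
        intro t
        rcases lt_trichotomy t (1/2) with ht | ht | ht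
        · obtain ⟨-, hD⟩ := Rr4 r0 q s t (by linarith) ht
          rw [hD]
          refine ⟨1, 0, by simp, ?_⟩
          have key : (1:ℝ) • (mfderiv 𝓘(ℝ, ℝ) 𝓘(ℝ, E) γ' (2*t)) (w3Lg3 (1,0,0)) +
              (0:ℝ) • (mfderiv 𝓘(ℝ, ℝ) 𝓘(ℝ, E) γ' (2*t)) (w3Lg3 (0,0,1)) = 0 := by
            rw [show w3Lg3 ((1:ℝ),(0:ℝ),(0:ℝ)) = (0 : ℝ) by norm_num]; erw [map_zero]
            simp
          exact key
        · obtain ⟨-, hD⟩ := Rr2 r0 q s t (by linarith) (by linarith)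
          rw [hD]
          exact ⟨1, 0, by simp, by simp; rfl⟩
        · obtain ⟨-, hD⟩ := Rr5 r0 q s t hq ht
          rw [hD]
          obtain ⟨a, b, hab, hr⟩ := hi (2*t-1)
          refine ⟨a, b, hab, ?_⟩
          have key : a • (mfderiv 𝓘(ℝ, ℝ×ℝ×ℝ) 𝓘(ℝ, E)
                (fun u : ℝ×ℝ×ℝ => W (u.1, r0, u.2.1, u.2.2)) (2*q-1, s, 2*t-1))
                  (w3LW3 (1,0,0)) +
              b • (mfderiv 𝓘(ℝ, ℝ×ℝ×ℝ) 𝓘(ℝ, E)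
                (fun u : ℝ×ℝ×ℝ => W (u.1, r0, u.2.1, u.2.2)) (2*q-1, s, 2*t-1))
                  (w3LW3 (0,0,1)) = 0 := by
            rw [show w3LW3 ((1:ℝ),(0:ℝ),(0:ℝ)) = (2:ℝ) • ((1:ℝ),(0:ℝ),(0:ℝ)) by
                norm_num [Prod.ext_iff],
              show w3LW3 ((0:ℝ),(0:ℝ),(1:ℝ)) = (2:ℝ) • ((0:ℝ),(0:ℝ),(1:ℝ)) by
                norm_num [Prod.ext_iff]]; erw [map_smul, map_smul]
            linear_combination (norm := module) (2:ℝ) • hr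
          exact key
      · right; left
        intro t
        rcases lt_trichotomy t (1/2) with ht | ht | ht
        · obtain ⟨-, hD⟩ := Rr4 r0 q s t (by linarith) ht
          rw [hD]
          refine ⟨1, 0, by simp, ?_⟩
          have key : (1:ℝ) • (mfderiv 𝓘(ℝ, ℝ) 𝓘(ℝ, E) γ' (2*t)) (w3Lg3 (0,1,0)) +
              (0:ℝ) • (mfderiv 𝓘(ℝ, ℝ) 𝓘(ℝ, E) γ' (2*t)) (w3Lg3 (0,0,1)) = 0 := by
            rw [show w3Lg3 ((0:ℝ),(1:ℝ),(0:ℝ)) = (0 : ℝ) by norm_num]; erw [map_zero]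
            simp
          exact key
        · obtain ⟨-, hD⟩ := Rr2 r0 q s t (by linarith) (by linarith)
          rw [hD]
          exact ⟨1, 0, by simp, by simp; rfl⟩
        · obtain ⟨-, hD⟩ := Rr5 r0 q s t hq ht
          rw [hD]
          obtain ⟨a, b, hab, hr⟩ := hii (2*t-1)
          refine ⟨2*a, b, ?_, ?_⟩
          · simp only [Prod.ext_iff, ne_eq, not_and_or] at hab ⊢
            rcases hab with hx | hx
            · left; intro hc; exact hx (by linarith)
            · right; exact hx
          · have key : (2*a) • (mfderiv 𝓘(ℝ, ℝ×ℝ×ℝ) 𝓘(ℝ, E)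
                  (fun u : ℝ×ℝ×ℝ => W (u.1, r0, u.2.1, u.2.2)) (2*q-1, s, 2*t-1))
                    (w3LW3 (0,1,0)) +
                b • (mfderiv 𝓘(ℝ, ℝ×ℝ×ℝ) 𝓘(ℝ, E)
                  (fun u : ℝ×ℝ×ℝ => W (u.1, r0, u.2.1, u.2.2)) (2*q-1, s, 2*t-1))
                    (w3LW3 (0,0,1)) = 0 := by
              rw [show w3LW3 ((0:ℝ),(1:ℝ),(0:ℝ)) = ((0:ℝ),(1:ℝ),(0:ℝ)) by
                  norm_num [Prod.ext_iff],
                show w3LW3 ((0:ℝ),(0:ℝ),(1:ℝ)) = (2:ℝ) • ((0:ℝ),(0:ℝ),(1:ℝ)) by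
                  norm_num [Prod.ext_iff]]; erw [map_smul]
              linear_combination (norm := module) (2:ℝ) • hr
            exact key
      · obtain ⟨a, b, hab, hr⟩ := hiii
        right; right
        refine ⟨a, 2*b, ?_, ?_⟩
        · simp only [Prod.ext_iff, ne_eq, not_and_or] at hab ⊢
          rcases hab with hx | hx
          · left; exact hx
          · right; intro hc; exact hx (by linarith)
        · intro t
          rcases lt_trichotomy t (1/2) with ht | ht | ht
          · obtain ⟨-, hD⟩ := Rr4 r0 q s t (by linarith) ht
            rw [hD]
            have key : a • (mfderiv 𝓘(ℝ, ℝ) 𝓘(ℝ, E) γ' (2*t)) (w3Lg3 (1,0,0)) +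
                (2*b) • (mfderiv 𝓘(ℝ, ℝ) 𝓘(ℝ, E) γ' (2*t)) (w3Lg3 (0,1,0)) = 0 := by
              rw [show w3Lg3 ((1:ℝ),(0:ℝ),(0:ℝ)) = (0 : ℝ) by norm_num,
                show w3Lg3 ((0:ℝ),(1:ℝ),(0:ℝ)) = (0 : ℝ) by norm_num]; erw [map_zero]
              simp
            exact key
          · obtain ⟨-, hD⟩ := Rr2 r0 q s t (by linarith) (by linarith)
            rw [hD]
            erw [ContinuousLinearMap.zero_apply]; simp
          · obtain ⟨-, hD⟩ := Rr5 r0 q s t hq ht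
            rw [hD]
            have key : a • (mfderiv 𝓘(ℝ, ℝ×ℝ×ℝ) 𝓘(ℝ, E)
                  (fun u : ℝ×ℝ×ℝ => W (u.1, r0, u.2.1, u.2.2)) (2*q-1, s, 2*t-1))
                    (w3LW3 (1,0,0)) +
                (2*b) • (mfderiv 𝓘(ℝ, ℝ×ℝ×ℝ) 𝓘(ℝ, E)
                  (fun u : ℝ×ℝ×ℝ => W (u.1, r0, u.2.1, u.2.2)) (2*q-1, s, 2*t-1))
                    (w3LW3 (0,1,0)) = 0 := by
              rw [show w3LW3 ((1:ℝ),(0:ℝ),(0:ℝ)) = (2:ℝ) • ((1:ℝ),(0:ℝ),(0:ℝ)) by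
                  norm_num [Prod.ext_iff],
                show w3LW3 ((0:ℝ),(1:ℝ),(0:ℝ)) = ((0:ℝ),(1:ℝ),(0:ℝ)) by
                  norm_num [Prod.ext_iff]]; erw [map_smul]
              linear_combination (norm := module) (2:ℝ) • hr (2*t-1)
            exact key
    -- the rank-1 homotopies on the boundary slices
  have β00 : IsRank1Homotopy E (fun y : ℝ×ℝ => W' (y.1, 0, 0, y.2)) :=
    ⟨sliceTwo 0 0, hβrk 0 hWη0.2⟩
  have β01 : IsRank1Homotopy E (fun y : ℝ×ℝ => W' (y.1, 0, 1, y.2)) :=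
    ⟨sliceTwo 0 1, hβrk 1 hWη1.2⟩
  have β10 : IsRank1Homotopy E (fun y : ℝ×ℝ => W' (y.1, 1, 0, y.2)) := by
    have he : (fun y : ℝ×ℝ => W' (y.1, 1, 0, y.2)) = (fun y : ℝ×ℝ => W' (y.1, 0, 0, y.2)) :=
      funext fun y => hs0r y.1 1 0 y.2
    rw [he]; exact β00
  have β11 : IsRank1Homotopy E (fun y : ℝ×ℝ => W' (y.1, 1, 1, y.2)) := by
    have he : (fun y : ℝ×ℝ => W' (y.1, 1, 1, y.2)) = (fun y : ℝ×ℝ => W' (y.1, 0, 1, y.2)) :=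
      funext fun y => hs1r y.1 1 0 y.2
    rw [he]; exact β01
  -- the laminated rank-2 homotopies on the r-slices
  have ρ0 : IsLaminatedRank2Homotopy E (fun p : ℝ×ℝ×ℝ => W' (p.1, 0, p.2.1, p.2.2)) :=
    ⟨⟨sliceThree 0, hρrk 0 hWl0.1.2.1, β00, β01⟩, hρlam 0 hWl0.2⟩
  have ρ1 : IsLaminatedRank2Homotopy E (fun p : ℝ×ℝ×ℝ => W' (p.1, 1, p.2.1, p.2.2)) :=
    ⟨⟨sliceThree 1, hρrk 1 hWl1.1.2.1, β10, β11⟩, hρlam 1 hWl1.2⟩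
  -- the rank-3 homotopy structure
  have isR3 : IsRank3Homotopy E W' :=
    ⟨⟨hW'sm, ⟨ε0, hε0pos, PWq_le, PWq_ge, PWr_le, PWr_ge, PWs_le, PWs_ge, PWt_le, PWt_ge⟩,
        fun a r s a' r' s' => (PT0 a r s).trans (PT0 a' r' s').symm,
        fun a r s a' r' s' => (PT1 a r s).trans (PT1 a' r' s').symm⟩,
      fun p => (covW p).2, ρ0, ρ1, hs0r, hs1r, β00, β01⟩
  -- identification of the whiskers with the boundary slices of W'
  have whisker_eq : leftWhisker3 γ J = fun x : ℝ×ℝ×ℝ => W' (0, x.1, x.2.1, x.2.2) := by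
    funext x
    simp only [leftWhisker3, hW'def]
    rw [if_pos (show (0:ℝ) ≤ 1/2 by norm_num)]
    by_cases ht : x.2.2 ≤ 1/2
    · rw [if_pos ht, if_pos ht, show (2*(0:ℝ)) = 0 by norm_num, hh0]
    · rw [if_neg ht, if_neg ht]
  have whisker'_eq : leftWhisker3 γ' J' = fun x : ℝ×ℝ×ℝ => W' (1, x.1, x.2.1, x.2.2) := by
    funext x
    simp only [leftWhisker3, hW'def]
    rw [if_neg (show ¬ (1:ℝ) ≤ 1/2 by norm_num)]
    by_cases ht : x.2.2 ≤ 1/2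
    · rw [if_pos ht, if_pos ht]
    · rw [if_neg ht, if_neg ht, show (2*(1:ℝ)-1) = 1 by norm_num, hW1]
  -- good three-path structure of the boundary slices
  have goodW : ∀ c : ℝ, IsGoodThreePath E (fun x : ℝ×ℝ×ℝ => W' (c, x.1, x.2.1, x.2.2)) := by
    intro c
    refine ⟨⟨hW'sm.comp (ContDiff.contMDiff (contDiff_const.prodMk contDiff_id)),
      ⟨ε0, hε0pos, ?_, ?_, ?_, ?_, ?_, ?_⟩, ?_, ?_⟩, ?_, ?_⟩
    · exact fun a s t ha => PWr_le c a s t ha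
    · exact fun a s t ha => PWr_ge c a s t ha
    · exact fun a s t hs => PWs_le c a s t hs
    · exact fun a s t hs => PWs_ge c a s t hs
    · exact fun a s t ht => PWt_le c a s t ht
    · exact fun a s t ht => PWt_ge c a s t ht
    · exact fun a s a' s' => (PT0 c a s).trans (PT0 c a' s').symm
    · exact fun a s a' s' => (PT1 c a s).trans (PT1 c a' s').symm
    · exact fun r r' t => hs0r c r r' t
    · exact fun r r' t => hs1r c r r' t
  refine ⟨?_, ?_, ?_⟩
  · rw [whisker_eq]; exact goodW 0
  · rw [whisker'_eq]; exact goodW 1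
  · exact ⟨W', isR3, fun r s t => (congrFun whisker_eq (r,s,t)).symm,
      fun r s t => (congrFun whisker'_eq (r,s,t)).symm⟩
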